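/- (Lemma 3 of the paper, first identity.) For all integers s ≥ 1 and u with 0 ≤ u ≤ s−1, one has the polynomial identity χ(s,u)·P − χ(s,u+1) = Λ^{s−u−1} · (Λ·R + Ω·G)^u · (Λ·P − Λ·R − Ω·G) in A[X]. -/

import Mathlib

open Polynomial

noncomputable def Lam (F : Type*) [CommRing F] (t k : ℕ) :
    Polynomial (MvPolynomial (Fin t ⊕ Fin k) F) :=
  X ^ t + ∑ j : Fin t, C (MvPolynomial.X (Sum.inl j)) * X ^ (j : ℕ)

noncomputable def Pp (F : Type*) [CommRing F] (t k : ℕ) :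
    Polynomial (MvPolynomial (Fin t ⊕ Fin k) F) :=
  ∑ i : Fin k, C (MvPolynomial.X (Sum.inr i)) * X ^ (i : ℕ)

noncomputable def liftP (F : Type*) [CommRing F] (t k : ℕ) (f : Polynomial F) :
    Polynomial (MvPolynomial (Fin t ⊕ Fin k) F) :=
  f.map MvPolynomial.C

/-- `Ω`, the negated quotient in the division of `Λ·R` by the monic polynomial `G`. -/
noncomputable def Om (F : Type*) [Field F] (t k : ℕ) (R G : Polynomial F) :
    Polynomial (MvPolynomial (Fin t ⊕ Fin k) F) :=
  -((Lam F t k * liftP F t k R) /ₘ liftP F t k G)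

/-- `χ(s,u) := Λ^{s−u}·(Λ·R + Ω·G)^u` if `u < s`, and
`χ(s,u) := (Σ_{i=0}^{s−1} binom(u,i) Λ^{s−i} R^{u−i} Ω^i G^i) mod G^s` if `u ≥ s`. -/
noncomputable def chi (F : Type*) [Field F] (t k : ℕ) (R G : Polynomial F) (s u : ℕ) :
    Polynomial (MvPolynomial (Fin t ⊕ Fin k) F) :=
  if u < s then
    Lam F t k ^ (s - u) * (Lam F t k * liftP F t k R + Om F t k R G * liftP F t k G) ^ u
  else
    (∑ i ∈ Finset.range s, u.choose i •
      (Lam F t k ^ (s - i) * liftP F t k R ^ (u - i) * Om F t k R G ^ i * liftP F t k G ^ i))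
      %ₘ liftP F t k G ^ s

/-- Lemma 3, first identity: for `0 ≤ u ≤ s−1`,
`χ(s,u)·P − χ(s,u+1) = Λ^{s−u−1}·(Λ·R + Ω·G)^u·(Λ·P − Λ·R − Ω·G)`. -/
theorem stmt8 (F : Type*) [Field F] (n t k : ℕ) (hn : 0 < n) (ht : 1 ≤ t) (hk : 1 ≤ k)
    (a b : Fin n → F) (ha : Function.Injective a)
    (G : Polynomial F) (hG : G = ∏ ℓ : Fin n, (X - C (a ℓ)))
    (R : Polynomial F) (hRdeg : R.degree < n) (hR : ∀ ℓ, R.eval (a ℓ) = b ℓ) :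
    ∀ s u : ℕ, 1 ≤ s → u ≤ s - 1 →
      chi F t k R G s u * Pp F t k - chi F t k R G s (u + 1) =
        Lam F t k ^ (s - u - 1) *
          (Lam F t k * liftP F t k R + Om F t k R G * liftP F t k G) ^ u *
          (Lam F t k * Pp F t k - Lam F t k * liftP F t k R -
            Om F t k R G * liftP F t k G) := by
  intro s u hs hu
  have hus : u < s := Nat.lt_of_le_pred hs hu
  set L := Lam F t k with hL
  set Rl := liftP F t k R with hRl
  set Gl := liftP F t k G with hGl
  set Oo := Om F t k R G with hOo
  set B := L * Rl + Oo * Gl with hB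
  -- G is monic of degree n
  have hGmonic : G.Monic := by
    rw [hG]; exact monic_prod_of_monic _ _ fun i _ => monic_X_sub_C (a i)
  have hGlmonic : Gl.Monic := hGmonic.map _
  have hGnd : G.natDegree = n := by
    rw [hG, natDegree_prod_of_monic _ _ fun i _ => monic_X_sub_C (a i)]
    simp [natDegree_X_sub_C]
  have hGlnd : Gl.natDegree = n := by
    rw [hGl, liftP, hGmonic.natDegree_map, hGnd]
  -- B is the remainder of L * Rl by Gl
  have hBmod : B = (L * Rl) %ₘ Gl := by
    rw [hB, hOo, Om, ← hL, ← hRl, ← hGl]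
    linear_combination -modByMonic_add_div (L * Rl) Gl
  have hBdeg : B.degree < Gl.degree := hBmod ▸ degree_modByMonic_lt _ hGlmonic
  -- key: chi s (u+1) = L ^ (s - u - 1) * B ^ (u + 1)
  have key : chi F t k R G s (u + 1) = L ^ (s - u - 1) * B ^ (u + 1) := by
    rcases lt_or_eq_of_le (Nat.succ_le_of_lt hus) with h | h
    · rw [chi, if_pos h]
      rfl
    · -- u + 1 = s
      subst h
      rw [chi, if_neg (lt_irrefl _), ← hL, ← hRl, ← hGl, ← hOo]
      have hsum : (∑ i ∈ Finset.range (u + 1), (u + 1).choose i •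
          (L ^ (u + 1 - i) * Rl ^ (u + 1 - i) * Oo ^ i * Gl ^ i))
          = B ^ (u + 1) - Oo ^ (u + 1) * Gl ^ (u + 1) := by
        have hbin := add_pow (Oo * Gl) (L * Rl) (u + 1)
        rw [add_comm (Oo * Gl) (L * Rl), ← hB, Finset.sum_range_succ,
          Nat.choose_self, Nat.sub_self, pow_zero] at hbin
        push_cast at hbin
        have hterm : ∀ i ∈ Finset.range (u + 1), (u + 1).choose i •
            (L ^ (u + 1 - i) * Rl ^ (u + 1 - i) * Oo ^ i * Gl ^ i)
            = (Oo * Gl) ^ i * (L * Rl) ^ (u + 1 - i) *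
              ((u + 1).choose i : Polynomial (MvPolynomial (Fin t ⊕ Fin k) F)) := by
          intro i _
          rw [nsmul_eq_mul, mul_pow, mul_pow]
          push_cast
          ring
        rw [Finset.sum_congr rfl hterm]
        linear_combination -hbin
      simp only [Nat.succ_eq_add_one]
      rw [hsum]
      have hdegBs : (B ^ (u + 1)).degree < (Gl ^ (u + 1)).degree := by
        by_cases hB0 : B = 0
        · rw [hB0, zero_pow (by omega), degree_zero, bot_lt_iff_ne_bot, ne_eq, degree_eq_bot]
          exact pow_ne_zero _ hGlmonic.ne_zero
        · apply degree_lt_degree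
          have h1 : B.natDegree < Gl.natDegree :=
            natDegree_lt_natDegree hB0 hBdeg
          rw [natDegree_pow, natDegree_pow]
          exact Nat.mul_lt_mul_of_pos_left h1 (by omega)
      have huniq := div_modByMonic_unique
        (f := B ^ (u + 1) - Oo ^ (u + 1) * Gl ^ (u + 1)) (g := Gl ^ (u + 1))
        (-(Oo ^ (u + 1))) (B ^ (u + 1))
        (hGlmonic.pow (u + 1)) ⟨by ring, hdegBs⟩
      rw [huniq.2]
      have h0 : u + 1 - u - 1 = 0 := by omega
      rw [h0, pow_zero, one_mul]
  rw [chi, if_pos hus, ← hL, ← hRl, ← hGl, ← hOo, ← hB, key]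
  have hpow : L ^ (s - u) = L ^ (s - u - 1) * L := by
    rw [← pow_succ]
    congr 1
    omega
  rw [hpow, pow_succ]
  ring
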